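/- Let μ and ν be probability measures on a measurable space Ω with μ ≪ ν and KL(μ‖ν) = ∫ log(dμ/dν) dμ < ∞, and let E be a measurable set with 0 < ν(E) < 1. Then μ(E) ≤ (KL(μ‖ν) + 1)/(−log ν(E)). -/

import Mathlib

open MeasureTheory

/-- `x - 1 ≤ x * log x` for `x ≥ 0`. -/
lemma aux_sub_one_le_mul_log {x : ℝ} (hx : 0 ≤ x) : x - 1 ≤ x * Real.log x := by
  rcases eq_or_lt_of_le hx with h | h
  · simp [← h]
  · have h1 : Real.log x⁻¹ ≤ x⁻¹ - 1 := Real.log_le_sub_one_of_pos (inv_pos.2 h)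
    rw [Real.log_inv] at h1
    have h2 : 1 - x⁻¹ ≤ Real.log x := by linarith
    calc x - 1 = x * (1 - x⁻¹) := by field_simp
    _ ≤ x * Real.log x := by
        exact mul_le_mul_of_nonneg_left h2 hx

/-- Jensen step: `μ(A) log(μ(A)/ν(A)) ≤ ∫_A log(dμ/dν) dμ`. -/
lemma aux_jensen {Ω : Type*} [MeasurableSpace Ω] (μ ν : Measure Ω)
    [IsProbabilityMeasure μ] [IsProbabilityMeasure ν]
    (hac : μ ≪ ν)
    (hKLint : Integrable (fun ω => Real.log ((μ.rnDeriv ν ω).toReal)) μ)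
    (A : Set Ω) (hA : MeasurableSet A) (h0 : ν A ≠ 0) :
    (μ A).toReal * Real.log ((μ A).toReal / (ν A).toReal) ≤
      ∫ ω in A, Real.log ((μ.rnDeriv ν ω).toReal) ∂μ := by
  set f : Ω → ℝ := fun ω => (μ.rnDeriv ν ω).toReal with hf
  set φ : ℝ → ℝ := fun x => x * Real.log x with hφ
  have hP : ν.restrict A ≠ 0 := by
    simp [Measure.restrict_eq_zero, h0]
  haveI : NeZero (ν.restrict A) := ⟨hP⟩
  have hfint : Integrable f (ν.restrict A) :=
    (Measure.integrable_toReal_rnDeriv).restrict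
  have hgint : Integrable (φ ∘ f) (ν.restrict A) := by
    have : Integrable (fun ω => f ω • Real.log (f ω)) ν :=
      (integrable_rnDeriv_smul_iff hac).mpr hKLint
    exact this.restrict
  have hjensen := Real.convexOn_mul_log.map_average_le
    (Real.continuous_mul_log.continuousOn) isClosed_Ici
    (Filter.Eventually.of_forall fun x => ENNReal.toReal_nonneg)
    hfint hgint
  have hνA : (0:ℝ) < (ν A).toReal :=
    ENNReal.toReal_pos h0 (measure_ne_top ν A)
  have havg1 : ⨍ x, f x ∂(ν.restrict A) = (μ A).toReal / (ν A).toReal := by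
    rw [average_eq, measureReal_restrict_apply_univ, measureReal_def,
      Measure.setIntegral_toReal_rnDeriv hac A]
    rw [smul_eq_mul, div_eq_inv_mul, measureReal_def]
  have hchange : ∫ x in A, φ (f x) ∂ν = ∫ ω in A, Real.log (f ω) ∂μ := by
    have := setIntegral_rnDeriv_smul hac hA
      (f := fun ω => Real.log (f ω))
    simpa [φ, smul_eq_mul] using this
  have havg2 : ⨍ x, φ (f x) ∂(ν.restrict A) =
      (ν A).toReal⁻¹ * ∫ ω in A, Real.log (f ω) ∂μ := by
    rw [average_eq, measureReal_restrict_apply_univ, measureReal_def, smul_eq_mul, hchange]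
  rw [havg1] at hjensen
  have hjensen' : φ ((μ A).toReal / (ν A).toReal) ≤
      (ν A).toReal⁻¹ * ∫ ω in A, Real.log (f ω) ∂μ := by
    calc φ ((μ A).toReal / (ν A).toReal) ≤ ⨍ x, φ (f x) ∂(ν.restrict A) := hjensen
    _ = _ := havg2
  have key := mul_le_mul_of_nonneg_left hjensen' hνA.le
  have heq1 : (ν A).toReal * ((ν A).toReal⁻¹ * ∫ ω in A, Real.log (f ω) ∂μ)
      = ∫ ω in A, Real.log (f ω) ∂μ := by
    field_simp
  have heq2 : (ν A).toReal * φ ((μ A).toReal / (ν A).toReal)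
      = (μ A).toReal * Real.log ((μ A).toReal / (ν A).toReal) := by
    rw [hφ]; field_simp
  rw [heq1, heq2] at key
  exact key

/-- **Lemma 2** (Bassily et al., Lemma 9): for probability measures `μ ≪ ν` with finite
KL divergence and any event `E` with `0 < ν(E) < 1`,
`μ(E) ≤ (KL(μ‖ν) + 1)/(−log ν(E))`. -/
theorem stmt_14 {Ω : Type*} [MeasurableSpace Ω] (μ ν : Measure Ω)
    [IsProbabilityMeasure μ] [IsProbabilityMeasure ν]
    (hac : μ ≪ ν)
    (hKLint : Integrable (fun ω => Real.log ((μ.rnDeriv ν ω).toReal)) μ)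
    (E : Set Ω) (hE : MeasurableSet E) (h0 : 0 < ν E) (h1 : ν E < 1) :
    (μ E).toReal ≤
      ((∫ ω, Real.log ((μ.rnDeriv ν ω).toReal) ∂μ) + 1) / (-Real.log ((ν E).toReal)) := by
  set g : Ω → ℝ := fun ω => Real.log ((μ.rnDeriv ν ω).toReal) with hg
  set a : ℝ := (μ E).toReal with ha
  set b : ℝ := (ν E).toReal with hb
  set a' : ℝ := (μ Eᶜ).toReal with ha'
  set b' : ℝ := (ν Eᶜ).toReal with hb'
  have ha0 : 0 ≤ a := ENNReal.toReal_nonneg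
  have ha'0 : 0 ≤ a' := ENNReal.toReal_nonneg
  have hb0 : 0 < b := ENNReal.toReal_pos h0.ne' (measure_ne_top ν E)
  have hb1 : b < 1 := by
    rw [hb, show (1:ℝ) = (1:ENNReal).toReal by simp]
    exact ENNReal.toReal_strict_mono (by simp) h1
  have hνEc : ν Eᶜ ≠ 0 := by
    have : 0 < ν Eᶜ := by
      rw [measure_compl hE (measure_ne_top ν E), measure_univ]
      exact tsub_pos_of_lt h1
    exact this.ne'
  have hb'0 : 0 < b' := ENNReal.toReal_pos hνEc (measure_ne_top ν Eᶜ)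
  have hb'1 : b' ≤ 1 := by
    rw [hb', show (1:ℝ) = (1:ENNReal).toReal by simp]
    exact ENNReal.toReal_mono (by simp) prob_le_one
  have hsum : a + a' = 1 := by
    rw [ha, ha', ← ENNReal.toReal_add (measure_ne_top μ E) (measure_ne_top μ Eᶜ),
      prob_add_prob_compl hE]
    simp
  -- split integral
  have hsplit : (∫ ω in E, g ω ∂μ) + (∫ ω in Eᶜ, g ω ∂μ) = ∫ ω, g ω ∂μ :=
    integral_add_compl hE hKLint
  have hJE := aux_jensen μ ν hac hKLint E hE h0.ne'
  have hJEc := aux_jensen μ ν hac hKLint Eᶜ hE.compl hνEc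
  -- rewrite E term
  have hEterm : a * Real.log a - a * Real.log b ≤ ∫ ω in E, g ω ∂μ := by
    refine le_trans ?_ hJE
    rcases eq_or_lt_of_le ha0 with h | h
    · rw [← ha, ← h]; simp
    · rw [Real.log_div h.ne' hb0.ne']
      ring_nf
      exact le_of_eq (by rw [← ha]; ring)
  have hEcterm : a' * Real.log a' ≤ ∫ ω in Eᶜ, g ω ∂μ := by
    refine le_trans ?_ hJEc
    rcases eq_or_lt_of_le ha'0 with h | h
    · rw [← ha', ← h]; simp
    · have : Real.log a' ≤ Real.log (a' / b') := by
        apply Real.log_le_log h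
        rw [le_div_iff₀ hb'0]
        nlinarith
      exact mul_le_mul_of_nonneg_left this ha'0
  have hxa : a - 1 ≤ a * Real.log a := aux_sub_one_le_mul_log ha0
  have hxa' : a' - 1 ≤ a' * Real.log a' := aux_sub_one_le_mul_log ha'0
  have hKL : a * (-Real.log b) - 1 ≤ ∫ ω, g ω ∂μ := by
    rw [← hsplit]
    nlinarith
  have hlogb : 0 < -Real.log b := by
    have := Real.log_neg hb0 hb1
    linarith
  rw [le_div_iff₀ hlogb]
  have : a * -Real.log b ≤ (∫ ω, g ω ∂μ) + 1 := by linarith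
  exact this
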